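/- Let D = (V, A) be a digraph, s a nonnegative integer, τ a degree list function on V, and Δ* a nonnegative integer such that every pair in every list τ(v) has both components at most Δ*. Let C ⊆ V be a 2s(Δ_D + 1)-type set for (D, τ). Define D' := D[C] (the subdigraph induced by C) and, for each v ∈ C, τ_C(v) := { (i, j) ∈ {0, ..., Δ*}² : (i, j) + (|N_D^-(v) \ C|, |N_D^+(v) \ C|) ∈ τ(v) } (componentwise addition). Then there exists a loopless arc set A' ⊆ (V × V) \ A with |A'| ≤ s such that deg_{D+A'}(v) ∈ τ(v) for all v ∈ V, if and only if there exists a loopless arc set A'' ⊆ (C × C) \ A with |A''| ≤ s such that deg_{D'+A''}(v) ∈ τ_C(v) for all v ∈ C. -/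
import Mathlib


/-- Indegree of vertex `v` in the digraph with arc set `A`. -/
def inDeg {V : Type*} [DecidableEq V] (A : Finset (V × V)) (v : V) : ℕ :=
  (A.filter fun a => a.2 = v).card

/-- Outdegree of vertex `v` in the digraph with arc set `A`. -/
def outDeg {V : Type*} [DecidableEq V] (A : Finset (V × V)) (v : V) : ℕ :=
  (A.filter fun a => a.1 = v).card

/-- Degree pair (indegree, outdegree) of vertex `v`. -/
def deg {V : Type*} [DecidableEq V] (A : Finset (V × V)) (v : V) : ℕ × ℕ :=
  (inDeg A v, outDeg A v)

/-- Maximum in- or outdegree in the digraph with arc set `A`. -/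
def maxDeg {V : Type*} [Fintype V] [DecidableEq V] (A : Finset (V × V)) : ℕ :=
  Finset.univ.sup fun v => max (inDeg A v) (outDeg A v)

/-- Inneighbors of `v`. -/
def inNbrs {V : Type*} [Fintype V] [DecidableEq V] (A : Finset (V × V)) (v : V) :
    Finset V :=
  Finset.univ.filter fun u => (u, v) ∈ A

/-- Outneighbors of `v`. -/
def outNbrs {V : Type*} [Fintype V] [DecidableEq V] (A : Finset (V × V)) (v : V) :
    Finset V :=
  Finset.univ.filter fun u => (v, u) ∈ A

/-- The satisfied vertices of type `t`: vertices `v` with `deg v + t ∈ τ v`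
and `deg v ∈ τ v`, i.e. `T_{D,τ}(t) \ U`. -/
def satType {V : Type*} [Fintype V] [DecidableEq V]
    (A : Finset (V × V)) (τ : V → Finset (ℕ × ℕ)) (t : ℕ × ℕ) : Finset V :=
  Finset.univ.filter fun v => deg A v + t ∈ τ v ∧ deg A v ∈ τ v

/-- `C` is an `α`-type set for `(D, τ)`: it contains all unsatisfied vertices
and, for each type `t ≠ (0,0)`, exactly `min |T_{D,τ}(t) \ U| α` satisfied
vertices of type `t`. -/
def IsTypeSet {V : Type*} [Fintype V] [DecidableEq V]
    (A : Finset (V × V)) (τ : V → Finset (ℕ × ℕ)) (α : ℕ) (C : Finset V) : Prop :=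
  (∀ v : V, deg A v ∉ τ v → v ∈ C) ∧
  ∀ t : ℕ × ℕ, t ≠ (0, 0) →
    (satType A τ t ∩ C).card = min (satType A τ t).card α

/-- The adjusted degree list function `τ_C` on the kernel. -/
def tauC {V : Type*} [Fintype V] [DecidableEq V]
    (A : Finset (V × V)) (τ : V → Finset (ℕ × ℕ)) (Δ : ℕ) (C : Finset V) (v : V) :
    Finset (ℕ × ℕ) :=
  (Finset.range (Δ + 1) ×ˢ Finset.range (Δ + 1)).filter fun p =>
    p + (((inNbrs A v) \ C).card, ((outNbrs A v) \ C).card) ∈ τ v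

set_option linter.unusedSectionVars false
section Helpers
variable {V : Type*} [Fintype V] [DecidableEq V]

lemma inDeg_union (A B : Finset (V × V)) (h : Disjoint A B) (v : V) :
    inDeg (A ∪ B) v = inDeg A v + inDeg B v := by
  unfold inDeg
  rw [Finset.filter_union, Finset.card_union_of_disjoint (Finset.disjoint_filter_filter h)]

lemma outDeg_union (A B : Finset (V × V)) (h : Disjoint A B) (v : V) :
    outDeg (A ∪ B) v = outDeg A v + outDeg B v := by
  unfold outDeg
  rw [Finset.filter_union, Finset.card_union_of_disjoint (Finset.disjoint_filter_filter h)]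

lemma deg_union (A B : Finset (V × V)) (h : Disjoint A B) (v : V) :
    deg (A ∪ B) v = deg A v + (inDeg B v, outDeg B v) := by
  simp [deg, inDeg_union A B h v, outDeg_union A B h v, Prod.ext_iff]

lemma card_inNbrs (A : Finset (V × V)) (v : V) : (inNbrs A v).card = inDeg A v := by
  unfold inNbrs inDeg
  apply Finset.card_bij (fun u _ => (u, v))
  · intro u hu; simp at hu; simp [hu]
  · intro u _ u' _ h; simpa using congrArg Prod.fst h
  · intro a ha; simp at ha
    refine ⟨a.1, by simpa using (show (a.1, v) ∈ A by rw [← ha.2]; exact ha.1), by simp [Prod.ext_iff, ha.2]⟩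

lemma card_outNbrs (A : Finset (V × V)) (v : V) : (outNbrs A v).card = outDeg A v := by
  unfold outNbrs outDeg
  apply Finset.card_bij (fun u _ => (v, u))
  · intro u hu; simp at hu; simp [hu]
  · intro u _ u' _ h; simpa using congrArg Prod.snd h
  · intro a ha; simp at ha
    refine ⟨a.2, by simpa using (show (v, a.2) ∈ A by rw [← ha.2]; exact ha.1), by simp [Prod.ext_iff, ha.2]⟩

lemma inDeg_le_maxDeg (A : Finset (V × V)) (v : V) : inDeg A v ≤ maxDeg A :=
  le_trans (le_max_left _ (outDeg A v)) (Finset.le_sup (f := fun v => max (inDeg A v) (outDeg A v)) (Finset.mem_univ v))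

lemma outDeg_le_maxDeg (A : Finset (V × V)) (v : V) : outDeg A v ≤ maxDeg A :=
  le_trans (le_max_right (inDeg A v) _) (Finset.le_sup (f := fun v => max (inDeg A v) (outDeg A v)) (Finset.mem_univ v))

end Helpers
section Split
variable {V : Type*} [Fintype V] [DecidableEq V]

lemma union_split (A B : Finset (V × V)) (C : Finset V) :
    A ∪ B = ((A ∩ C ×ˢ C) ∪ B) ∪ (A \ (C ×ˢ C)) := by
  ext a; simp only [Finset.mem_union, Finset.mem_inter, Finset.mem_sdiff]; tauto

lemma disj_split (A B : Finset (V × V)) (C : Finset V) (hB : B ⊆ C ×ˢ C) :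
    Disjoint ((A ∩ C ×ˢ C) ∪ B) (A \ (C ×ˢ C)) := by
  rw [Finset.disjoint_left]
  intro a ha ha'
  rw [Finset.mem_sdiff] at ha'
  rcases Finset.mem_union.mp ha with h | h
  · exact ha'.2 (Finset.mem_inter.mp h).2
  · exact ha'.2 (hB h)

lemma inDeg_outside (A : Finset (V × V)) (C : Finset V) (v : V) (hv : v ∈ C) :
    inDeg (A \ (C ×ˢ C)) v = ((inNbrs A v) \ C).card := by
  unfold inDeg
  symm
  apply Finset.card_bij (fun u _ => (u, v))
  · intro u hu
    simp only [Finset.mem_sdiff, inNbrs, Finset.mem_filter, Finset.mem_univ, true_and] at hu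
    exact Finset.mem_filter.mpr ⟨Finset.mem_sdiff.mpr ⟨hu.1,
      fun h => hu.2 (Finset.mem_product.mp h).1⟩, rfl⟩
  · intro u _ u' _ h; simpa using congrArg Prod.fst h
  · intro a ha
    simp only [Finset.mem_filter, Finset.mem_sdiff, Finset.mem_product] at ha
    obtain ⟨⟨h1, h2⟩, h3⟩ := ha
    refine ⟨a.1, ?_, by simp [Prod.ext_iff, h3]⟩
    simp only [Finset.mem_sdiff, inNbrs, Finset.mem_filter, Finset.mem_univ, true_and]
    constructor
    · rw [← h3]; exact h1
    · intro hc; exact h2 ⟨hc, h3 ▸ hv⟩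

lemma outDeg_outside (A : Finset (V × V)) (C : Finset V) (v : V) (hv : v ∈ C) :
    outDeg (A \ (C ×ˢ C)) v = ((outNbrs A v) \ C).card := by
  unfold outDeg
  symm
  apply Finset.card_bij (fun u _ => (v, u))
  · intro u hu
    simp only [Finset.mem_sdiff, outNbrs, Finset.mem_filter, Finset.mem_univ, true_and] at hu
    exact Finset.mem_filter.mpr ⟨Finset.mem_sdiff.mpr ⟨hu.1,
      fun h => hu.2 (Finset.mem_product.mp h).2⟩, rfl⟩
  · intro u _ u' _ h; simpa using congrArg Prod.snd h
  · intro a ha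
    simp only [Finset.mem_filter, Finset.mem_sdiff, Finset.mem_product] at ha
    obtain ⟨⟨h1, h2⟩, h3⟩ := ha
    refine ⟨a.2, ?_, by simp [Prod.ext_iff, h3]⟩
    simp only [Finset.mem_sdiff, outNbrs, Finset.mem_filter, Finset.mem_univ, true_and]
    constructor
    · rw [← h3]; exact h1
    · intro hc; exact h2 ⟨h3 ▸ hv, hc⟩

/-- Degree decomposition: for `v ∈ C` and `B ⊆ C ×ˢ C`,
`deg (A ∪ B) v = deg ((A ∩ C×C) ∪ B) v + (offsets)`. -/
lemma deg_split (A B : Finset (V × V)) (C : Finset V) (hB : B ⊆ C ×ˢ C) (v : V) (hv : v ∈ C) :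
    inDeg (A ∪ B) v = inDeg ((A ∩ C ×ˢ C) ∪ B) v + ((inNbrs A v) \ C).card ∧
    outDeg (A ∪ B) v = outDeg ((A ∩ C ×ˢ C) ∪ B) v + ((outNbrs A v) \ C).card := by
  constructor
  · rw [union_split A B C, inDeg_union _ _ (disj_split A B C hB), inDeg_outside A C v hv]
  · rw [union_split A B C, outDeg_union _ _ (disj_split A B C hB), outDeg_outside A C v hv]

end Split
section Transfer
variable {V : Type*} [Fintype V] [DecidableEq V]

/-- A solution of the original instance contained in `C ×ˢ C` yields a kernel solution. -/
lemma kernel_deg_of_sub (A : Finset (V × V)) (τ : V → Finset (ℕ × ℕ)) (Δ : ℕ)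
    (hτΔ : ∀ v : V, ∀ p ∈ τ v, p.1 ≤ Δ ∧ p.2 ≤ Δ) (C : Finset V)
    (B : Finset (V × V)) (hBC : B ⊆ C ×ˢ C) (hBA : ∀ a ∈ B, a ∉ A)
    (hdeg : ∀ v : V, deg (A ∪ B) v ∈ τ v) :
    ∀ v ∈ C, deg ((A ∩ C ×ˢ C) ∪ B) v ∈ tauC A τ Δ C v := by
  intro v hv
  obtain ⟨h1, h2⟩ := deg_split A B C hBC v hv
  have hmem := hdeg v
  have hin : (deg (A ∪ B) v).1 ≤ Δ := (hτΔ v _ hmem).1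
  have hout : (deg (A ∪ B) v).2 ≤ Δ := (hτΔ v _ hmem).2
  unfold tauC
  rw [Finset.mem_filter]
  constructor
  · rw [Finset.mem_product, Finset.mem_range, Finset.mem_range]
    constructor
    · have : (deg ((A ∩ C ×ˢ C) ∪ B) v).1 ≤ Δ := by
        calc (deg ((A ∩ C ×ˢ C) ∪ B) v).1 ≤ (deg (A ∪ B) v).1 := by
              show inDeg _ v ≤ inDeg _ v; rw [h1]; omega
          _ ≤ Δ := hin
      omega
    · have : (deg ((A ∩ C ×ˢ C) ∪ B) v).2 ≤ Δ := by
        calc (deg ((A ∩ C ×ˢ C) ∪ B) v).2 ≤ (deg (A ∪ B) v).2 := by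
              show outDeg _ v ≤ outDeg _ v; rw [h2]; omega
          _ ≤ Δ := hout
      omega
  · have : deg ((A ∩ C ×ˢ C) ∪ B) v + (((inNbrs A v) \ C).card, ((outNbrs A v) \ C).card)
        = deg (A ∪ B) v := by
      show (inDeg _ v, outDeg _ v) + _ = (inDeg _ v, outDeg _ v)
      rw [Prod.mk_add_mk, h1, h2]
    rw [this]; exact hmem

/-- A kernel solution is a solution of the original instance. -/
lemma orig_deg_of_kernel (A : Finset (V × V)) (τ : V → Finset (ℕ × ℕ)) (Δ : ℕ)
    (C : Finset V) (hCu : ∀ v : V, deg A v ∉ τ v → v ∈ C)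
    (B : Finset (V × V)) (hBC : B ⊆ C ×ˢ C) (hBA : ∀ a ∈ B, a ∉ A)
    (hdeg : ∀ v ∈ C, deg ((A ∩ C ×ˢ C) ∪ B) v ∈ tauC A τ Δ C v) :
    ∀ v : V, deg (A ∪ B) v ∈ τ v := by
  intro v
  by_cases hv : v ∈ C
  · have hmem := hdeg v hv
    unfold tauC at hmem
    rw [Finset.mem_filter] at hmem
    obtain ⟨h1, h2⟩ := deg_split A B C hBC v hv
    have : deg (A ∪ B) v
        = deg ((A ∩ C ×ˢ C) ∪ B) v + (((inNbrs A v) \ C).card, ((outNbrs A v) \ C).card) := by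
      show (inDeg _ v, outDeg _ v) = (inDeg _ v, outDeg _ v) + _
      rw [Prod.mk_add_mk, h1, h2]
    rw [this]; exact hmem.2
  · have hBzero : ∀ u : V, (u, v) ∉ B ∧ (v, u) ∉ B := by
      intro u
      constructor
      · intro h; exact hv (Finset.mem_product.mp (hBC h)).2
      · intro h; exact hv (Finset.mem_product.mp (hBC h)).1
    have hin : inDeg B v = 0 := by
      unfold inDeg
      rw [Finset.card_eq_zero, Finset.filter_eq_empty_iff]
      intro a ha h
      exact (hBzero a.1).1 (by rwa [show (a.1, v) = a by rw [← h]] )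
    have hout : outDeg B v = 0 := by
      unfold outDeg
      rw [Finset.card_eq_zero, Finset.filter_eq_empty_iff]
      intro a ha h
      exact (hBzero a.2).2 (by rwa [show (v, a.2) = a by rw [← h]] )
    have hdisj : Disjoint A B := Finset.disjoint_right.mpr hBA
    have : deg (A ∪ B) v = deg A v := by
      rw [deg_union A B hdisj, hin, hout]
      simp
    rw [this]
    by_contra hcon
    exact hv (hCu v hcon)

end Transfer
section Swap
variable {V : Type*} [Fintype V] [DecidableEq V]

lemma filter_card_g (A' : Finset (V × V)) (f : V × V → V) (x w : V) (hxw : w ≠ x)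
    (hw : ∀ a ∈ A', f a ≠ w) (v : V) :
    (A'.filter fun a => (if f a = x then w else f a) = v).card =
      if v = w then (A'.filter fun a => f a = x).card
      else if v = x then 0
      else (A'.filter fun a => f a = v).card := by
  split_ifs with h1 h2
  · subst h1; congr 1
    apply Finset.filter_congr
    intro a ha
    split_ifs with h
    · simp [h]
    · exact iff_of_false (hw a ha) h
  · subst h2
    rw [Finset.card_eq_zero, Finset.filter_eq_empty_iff]
    intro a _
    split_ifs with h
    · exact hxw
    · exact h
  · congr 1
    apply Finset.filter_congr
    intro a _
    split_ifs with h
    · exact iff_of_false (fun hh => h1 hh.symm) (fun hh => h2 (hh.symm.trans h))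
    · exact Iff.rfl

lemma swap_step (A : Finset (V × V)) (s : ℕ) (τ : V → Finset (ℕ × ℕ)) (C : Finset V)
    (hC : IsTypeSet A τ (2 * s * (maxDeg A + 1)) C)
    (A' : Finset (V × V)) (hdisj : ∀ a ∈ A', a ∉ A) (hloop : ∀ v : V, (v, v) ∉ A')
    (hcard : A'.card ≤ s) (hdeg : ∀ v : V, deg (A ∪ A') v ∈ τ v)
    (x : V) (hx : x ∈ (A'.image Prod.fst ∪ A'.image Prod.snd) \ C) :
    ∃ B : Finset (V × V), (∀ a ∈ B, a ∉ A) ∧ (∀ v : V, (v, v) ∉ B) ∧ B.card = A'.card ∧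
      (∀ v : V, deg (A ∪ B) v ∈ τ v) ∧
      (B.image Prod.fst ∪ B.image Prod.snd) \ C ⊆
        ((A'.image Prod.fst ∪ A'.image Prod.snd) \ C).erase x := by
  set E := A'.image Prod.fst ∪ A'.image Prod.snd with hE
  obtain ⟨hxE, hxC⟩ := Finset.mem_sdiff.mp hx
  have hDisj : Disjoint A A' := Finset.disjoint_right.mpr hdisj
  have hne : ∀ a ∈ A', a.1 ≠ a.2 := by
    intro a ha h
    have hmk : (a.1, a.1) = a := by nth_rewrite 2 [h]; exact Prod.mk.eta
    exact hloop a.1 (hmk ▸ ha)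
  set t : ℕ × ℕ := (inDeg A' x, outDeg A' x) with hts
  have ht : t ≠ (0, 0) := by
    rcases Finset.mem_union.mp hxE with h | h
    · obtain ⟨a, ha, hax⟩ := Finset.mem_image.mp h
      have : 0 < outDeg A' x :=
        Finset.card_pos.mpr ⟨a, Finset.mem_filter.mpr ⟨ha, hax⟩⟩
      intro hcon
      rw [hts, Prod.mk.injEq] at hcon
      omega
    · obtain ⟨a, ha, hax⟩ := Finset.mem_image.mp h
      have : 0 < inDeg A' x :=
        Finset.card_pos.mpr ⟨a, Finset.mem_filter.mpr ⟨ha, hax⟩⟩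
      intro hcon
      rw [hts, Prod.mk.injEq] at hcon
      omega
  have hxsat : deg A x ∈ τ x := by
    by_contra hcon
    exact hxC (hC.1 x hcon)
  have hxtype : deg A x + t ∈ τ x := by
    have := hdeg x
    rwa [deg_union A A' hDisj] at this
  have hxSat : x ∈ satType A τ t :=
    Finset.mem_filter.mpr ⟨Finset.mem_univ x, hxtype, hxsat⟩
  -- the intersection with C has full size α
  have hScard : (satType A τ t ∩ C).card = 2 * s * (maxDeg A + 1) := by
    have h := hC.2 t ht
    rcases le_or_gt (2 * s * (maxDeg A + 1)) (satType A τ t).card with hle | hlt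
    · rwa [min_eq_right hle] at h
    · rw [min_eq_left hlt.le] at h
      exfalso
      have heq := Finset.eq_of_subset_of_card_le Finset.inter_subset_left (le_of_eq h.symm)
      exact hxC (Finset.mem_inter.mp (heq ▸ hxSat)).2
  -- forbidden set
  set F : Finset V := E ∪ A'.biUnion (fun a =>
      if a.1 = x then inNbrs A a.2 else if a.2 = x then outNbrs A a.1 else ∅) with hF
  have hFcard : F.card ≤ 2 * A'.card + A'.card * maxDeg A := by
    have h1 : E.card ≤ 2 * A'.card := by
      calc E.card ≤ (A'.image Prod.fst).card + (A'.image Prod.snd).card :=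
            Finset.card_union_le _ _
        _ ≤ A'.card + A'.card := Nat.add_le_add (Finset.card_image_le) (Finset.card_image_le)
        _ = 2 * A'.card := by ring
    have h2 : (A'.biUnion (fun a =>
        if a.1 = x then inNbrs A a.2 else if a.2 = x then outNbrs A a.1 else ∅)).card
        ≤ A'.card * maxDeg A := by
      apply Finset.card_biUnion_le_card_mul
      intro a _
      split_ifs
      · rw [card_inNbrs]; exact inDeg_le_maxDeg A _
      · rw [card_outNbrs]; exact outDeg_le_maxDeg A _
      · simp
    calc F.card ≤ E.card + _ := Finset.card_union_le _ _
      _ ≤ 2 * A'.card + A'.card * maxDeg A := Nat.add_le_add h1 h2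
  have hxF : x ∈ F := Finset.mem_union_left _ hxE
  -- an available replacement vertex exists
  have havail : ((satType A τ t ∩ C) \ F).Nonempty := by
    set S := satType A τ t ∩ C with hS
    have h1 : S.card ≤ (S \ F).card + (F ∩ C).card := by
      have hsub : S ⊆ (S \ F) ∪ (F ∩ C) := by
        intro v hv
        by_cases hvF : v ∈ F
        · exact Finset.mem_union_right _
            (Finset.mem_inter.mpr ⟨hvF, (Finset.mem_inter.mp hv).2⟩)
        · exact Finset.mem_union_left _ (Finset.mem_sdiff.mpr ⟨hv, hvF⟩)
      calc S.card ≤ ((S \ F) ∪ (F ∩ C)).card := Finset.card_le_card hsub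
        _ ≤ (S \ F).card + (F ∩ C).card := Finset.card_union_le _ _
    have h2 : (F ∩ C).card + 1 ≤ F.card := by
      have hsub : F ∩ C ⊆ F.erase x := by
        intro v hv
        rw [Finset.mem_erase]
        exact ⟨fun h => hxC (h ▸ (Finset.mem_inter.mp hv).2), (Finset.mem_inter.mp hv).1⟩
      have h3 := Finset.card_le_card hsub
      rw [Finset.card_erase_of_mem hxF] at h3
      have h4 : 0 < F.card := Finset.card_pos.mpr ⟨x, hxF⟩
      omega
    have h3 : A'.card * maxDeg A ≤ s * maxDeg A := Nat.mul_le_mul_right _ hcard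
    have h4 : 2 * s * (maxDeg A + 1) = 2 * s + 2 * (s * maxDeg A) := by ring
    rw [← Finset.card_pos]
    rw [h4] at hScard
    have h5 : 2 * A'.card ≤ 2 * s := by omega
    have hX : (S \ F).card + (F ∩ C).card ≥ 2 * s + 2 * (s * maxDeg A) := by
      rw [← hScard]; exact h1
    have hY : (F ∩ C).card + 1 ≤ 2 * s + s * maxDeg A := by linarith [h2, hFcard, h3, h5]
    obtain ⟨P, hP⟩ : ∃ P, s * maxDeg A = P := ⟨_, rfl⟩
    rw [hP] at hX hY
    omega
  obtain ⟨w, hw⟩ := havail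
  obtain ⟨hwS, hwF⟩ := Finset.mem_sdiff.mp hw
  have hwC : w ∈ C := (Finset.mem_inter.mp hwS).2
  have hwtype : deg A w + t ∈ τ w :=
    (Finset.mem_filter.mp (Finset.mem_inter.mp hwS).1).2.1
  have hwE : w ∉ E := fun h => hwF (Finset.mem_union_left _ h)
  have hwend : ∀ a ∈ A', a.1 ≠ w ∧ a.2 ≠ w := by
    intro a ha
    constructor
    · intro h
      exact hwE (Finset.mem_union_left _ (Finset.mem_image.mpr ⟨a, ha, h⟩))
    · intro h
      exact hwE (Finset.mem_union_right _ (Finset.mem_image.mpr ⟨a, ha, h⟩))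
  have hwx : w ≠ x := fun h => hxC (h ▸ hwC)
  -- the replacement map
  set g : V → V := fun u => if u = x then w else u with hg
  have hgx : g x = w := by simp [hg]
  have hgne : ∀ u, u ≠ x → g u = u := by intro u hu; simp [hg, hu]
  have hginj : ∀ u u', u ≠ w → u' ≠ w → g u = g u' → u = u' := by
    intro u u' h h' hgu
    by_cases h1 : u = x <;> by_cases h2 : u' = x
    · rw [h1, h2]
    · rw [h1, hgx, hgne u' h2] at hgu; exact absurd hgu.symm h'
    · rw [h2, hgx, hgne u h1] at hgu; exact absurd hgu h
    · rwa [hgne u h1, hgne u' h2] at hgu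
  set m : V × V → V × V := fun a => (g a.1, g a.2) with hm
  set B := A'.image m with hB
  have hinj : Set.InjOn m A' := by
    intro a ha b hb h
    rw [Prod.ext_iff] at h ⊢
    exact ⟨hginj _ _ (hwend a ha).1 (hwend b hb).1 h.1,
           hginj _ _ (hwend a ha).2 (hwend b hb).2 h.2⟩
  have hcardB : B.card = A'.card := Finset.card_image_of_injOn hinj
  have hBA : ∀ b ∈ B, b ∉ A := by
    intro b hb
    obtain ⟨a, ha, rfl⟩ := Finset.mem_image.mp hb
    by_cases h1 : a.1 = x
    · have h2 : a.2 ≠ x := fun h => hne a ha (h1.trans h.symm)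
      have hma : m a = (w, a.2) := by simp [hm, h1, hgx, hgne a.2 h2]
      rw [hma]
      intro hmem
      apply hwF
      refine Finset.mem_union_right _ (Finset.mem_biUnion.mpr ⟨a, ha, ?_⟩)
      rw [if_pos h1]
      exact Finset.mem_filter.mpr ⟨Finset.mem_univ _, hmem⟩
    · by_cases h2 : a.2 = x
      · have hma : m a = (a.1, w) := by simp [hm, h2, hgx, hgne a.1 h1]
        rw [hma]
        intro hmem
        apply hwF
        refine Finset.mem_union_right _ (Finset.mem_biUnion.mpr ⟨a, ha, ?_⟩)
        rw [if_neg h1, if_pos h2]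
        exact Finset.mem_filter.mpr ⟨Finset.mem_univ _, hmem⟩
      · have hma : m a = a := by
          rw [hm]; rw [Prod.ext_iff]; exact ⟨hgne a.1 h1, hgne a.2 h2⟩
        rw [hma]
        exact hdisj a ha
  have hBloop : ∀ v : V, (v, v) ∉ B := by
    intro v hb
    obtain ⟨a, ha, heq⟩ := Finset.mem_image.mp hb
    rw [Prod.ext_iff] at heq
    have : g a.1 = g a.2 := heq.1.trans heq.2.symm
    exact hne a ha (hginj _ _ (hwend a ha).1 (hwend a ha).2 this)
  have hDisjB : Disjoint A B := Finset.disjoint_right.mpr hBA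
  -- degree computations
  have hinB : ∀ v, inDeg B v =
      if v = w then inDeg A' x else if v = x then 0 else inDeg A' v := by
    intro v
    unfold inDeg
    rw [hB, Finset.filter_image,
      Finset.card_image_of_injOn (hinj.mono (Finset.filter_subset _ _))]
    exact filter_card_g A' Prod.snd x w hwx (fun a ha => (hwend a ha).2) v
  have houtB : ∀ v, outDeg B v =
      if v = w then outDeg A' x else if v = x then 0 else outDeg A' v := by
    intro v
    unfold outDeg
    rw [hB, Finset.filter_image,
      Finset.card_image_of_injOn (hinj.mono (Finset.filter_subset _ _))]
    exact filter_card_g A' Prod.fst x w hwx (fun a ha => (hwend a ha).1) v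
  have hdegB : ∀ v : V, deg (A ∪ B) v ∈ τ v := by
    intro v
    rw [deg_union A B hDisjB]
    by_cases hvw : v = w
    · subst hvw
      rw [hinB, houtB, if_pos rfl, if_pos rfl]
      exact hwtype
    · by_cases hvx : v = x
      · rw [hinB, houtB, if_neg hvw, if_neg hvw, if_pos hvx, if_pos hvx, hvx]
        have hz : deg A x + ((0 : ℕ), (0 : ℕ)) = deg A x := by
          rw [show ((0, 0) : ℕ × ℕ) = 0 from rfl, add_zero]
        rw [hz]; exact hxsat
      · rw [hinB, houtB, if_neg hvw, if_neg hvw, if_neg hvx, if_neg hvx]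
        rw [← deg_union A A' hDisj]
        exact hdeg v
  refine ⟨B, hBA, hBloop, hcardB, hdegB, ?_⟩
  intro v hv
  obtain ⟨hvB, hvC⟩ := Finset.mem_sdiff.mp hv
  have hvE : v ∈ E ∧ v ≠ x := by
    rcases Finset.mem_union.mp hvB with h | h
    · obtain ⟨b, hb, hbv⟩ := Finset.mem_image.mp h
      obtain ⟨a, ha, rfl⟩ := Finset.mem_image.mp hb
      by_cases h1 : a.1 = x
      · exfalso
        apply hvC
        have : (m a).1 = w := by simp [hm, h1, hgx]
        rw [← hbv, this]; exact hwC
      · have : (m a).1 = a.1 := by simp [hm, hgne a.1 h1]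
        rw [← hbv, this]
        exact ⟨Finset.mem_union_left _ (Finset.mem_image.mpr ⟨a, ha, rfl⟩), h1⟩
    · obtain ⟨b, hb, hbv⟩ := Finset.mem_image.mp h
      obtain ⟨a, ha, rfl⟩ := Finset.mem_image.mp hb
      by_cases h1 : a.2 = x
      · exfalso
        apply hvC
        have : (m a).2 = w := by simp [hm, h1, hgx]
        rw [← hbv, this]; exact hwC
      · have : (m a).2 = a.2 := by simp [hm, hgne a.2 h1]
        rw [← hbv, this]
        exact ⟨Finset.mem_union_right _ (Finset.mem_image.mpr ⟨a, ha, rfl⟩), h1⟩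
  exact Finset.mem_erase.mpr ⟨hvE.2, Finset.mem_sdiff.mpr ⟨hvE.1, hvC⟩⟩

end Swap
section Main
variable {V : Type*} [Fintype V] [DecidableEq V]

lemma reduce_to_C (A : Finset (V × V)) (s : ℕ) (τ : V → Finset (ℕ × ℕ)) (C : Finset V)
    (hC : IsTypeSet A τ (2 * s * (maxDeg A + 1)) C) :
    ∀ n : ℕ, ∀ A' : Finset (V × V),
      ((A'.image Prod.fst ∪ A'.image Prod.snd) \ C).card ≤ n →
      (∀ a ∈ A', a ∉ A) → (∀ v : V, (v, v) ∉ A') → A'.card ≤ s →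
      (∀ v : V, deg (A ∪ A') v ∈ τ v) →
      ∃ B : Finset (V × V), B ⊆ C ×ˢ C ∧ (∀ a ∈ B, a ∉ A) ∧ (∀ v : V, (v, v) ∉ B) ∧
        B.card ≤ s ∧ (∀ v : V, deg (A ∪ B) v ∈ τ v) := by
  intro n
  induction n with
  | zero =>
    intro A' hn h1 h2 h3 h4
    refine ⟨A', ?_, h1, h2, h3, h4⟩
    intro a ha
    have hemp : (A'.image Prod.fst ∪ A'.image Prod.snd) \ C = ∅ :=
      Finset.card_eq_zero.mp (Nat.le_zero.mp hn)
    have hsub : A'.image Prod.fst ∪ A'.image Prod.snd ⊆ C := by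
      intro v hv
      by_contra hvC
      have : v ∈ (A'.image Prod.fst ∪ A'.image Prod.snd) \ C :=
        Finset.mem_sdiff.mpr ⟨hv, hvC⟩
      rw [hemp] at this
      exact absurd this (Finset.notMem_empty v)
    rw [Finset.mem_product]
    exact ⟨hsub (Finset.mem_union_left _ (Finset.mem_image.mpr ⟨a, ha, rfl⟩)),
           hsub (Finset.mem_union_right _ (Finset.mem_image.mpr ⟨a, ha, rfl⟩))⟩
  | succ n ih =>
    intro A' hn h1 h2 h3 h4
    by_cases hle : ((A'.image Prod.fst ∪ A'.image Prod.snd) \ C).card ≤ n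
    · exact ih A' hle h1 h2 h3 h4
    · have hpos : 0 < ((A'.image Prod.fst ∪ A'.image Prod.snd) \ C).card := by omega
      obtain ⟨x, hx⟩ := Finset.card_pos.mp hpos
      obtain ⟨B, hBA, hBloop, hBcard, hBdeg, hBends⟩ :=
        swap_step A s τ C hC A' h1 h2 h3 h4 x hx
      apply ih B _ hBA hBloop (hBcard ▸ h3) hBdeg
      calc ((B.image Prod.fst ∪ B.image Prod.snd) \ C).card
          ≤ (((A'.image Prod.fst ∪ A'.image Prod.snd) \ C).erase x).card :=
            Finset.card_le_card hBends
        _ = ((A'.image Prod.fst ∪ A'.image Prod.snd) \ C).card - 1 :=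
            Finset.card_erase_of_mem hx
        _ ≤ n := by omega

end Main

/-- **Correctness of the DDConC kernelization.** The original instance is a
yes-instance if and only if the reduced instance `(D[C], s, τ_C)` is a
yes-instance. -/
theorem ddconc_kernel_correct {V : Type*} [Fintype V] [DecidableEq V]
    (A : Finset (V × V)) (hA : ∀ v : V, (v, v) ∉ A)
    (s : ℕ) (τ : V → Finset (ℕ × ℕ)) (Δ : ℕ)
    (hτΔ : ∀ v : V, ∀ p ∈ τ v, p.1 ≤ Δ ∧ p.2 ≤ Δ)
    (C : Finset V)
    (hC : IsTypeSet A τ (2 * s * (maxDeg A + 1)) C) :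
    (∃ A' : Finset (V × V),
      (∀ a ∈ A', a ∉ A) ∧ (∀ v : V, (v, v) ∉ A') ∧ A'.card ≤ s ∧
      (∀ v : V, deg (A ∪ A') v ∈ τ v)) ↔
    (∃ A'' : Finset (V × V),
      A'' ⊆ C ×ˢ C ∧
      (∀ a ∈ A'', a ∉ A) ∧ (∀ v : V, (v, v) ∉ A'') ∧ A''.card ≤ s ∧
      (∀ v ∈ C, deg ((A ∩ C ×ˢ C) ∪ A'') v ∈ tauC A τ Δ C v)) := by
  constructor
  · rintro ⟨A', h1, h2, h3, h4⟩
    obtain ⟨B, hBC, hBA, hBloop, hBcard, hBdeg⟩ :=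
      reduce_to_C A s τ C hC ((A'.image Prod.fst ∪ A'.image Prod.snd) \ C).card A'
        le_rfl h1 h2 h3 h4
    exact ⟨B, hBC, hBA, hBloop, hBcard,
      kernel_deg_of_sub A τ Δ hτΔ C B hBC hBA hBdeg⟩
  · rintro ⟨A'', hC1, hC2, hC3, hC4, hC5⟩
    exact ⟨A'', hC2, hC3, hC4,
      orig_deg_of_kernel A τ Δ C hC.1 A'' hC1 hC2 hC5⟩
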